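/- Let X be a nonempty finite set and B a family of subsets of X such that not all members of B have the same cardinality and every element of X lies in some member of B. Then there exists x0 in X such that the average cardinality of the members of B strictly exceeds the average cardinality of the members of B that do not contain x0. -/
import Mathlib


open Finset Polynomial

namespace AvgMatching

variable {V : Type*} [Fintype V] [DecidableEq V]

/-- A matching of `G`, viewed as a finite set of edges of `G`
no two of which share a vertex. -/
def IsMatchingSet (G : SimpleGraph V) (A : Finset (Sym2 V)) : Prop :=
  ↑A ⊆ G.edgeSet ∧ (A : Set (Sym2 V)).Pairwise fun e f => ∀ v : V, v ∈ e → v ∉ f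

open Classical in
/-- The finite set of all matchings of `G` (including the empty matching). -/
noncomputable def matchings (G : SimpleGraph V) : Finset (Finset (Sym2 V)) :=
  Finset.univ.filter (IsMatchingSet G)

/-- `M(G)`: the number of matchings of `G` (including the empty one). -/
noncomputable def numM (G : SimpleGraph V) : ℕ := (matchings G).card

/-- `S(G)`: the sum of the sizes of all matchings of `G`. -/
noncomputable def totS (G : SimpleGraph V) : ℕ := ∑ A ∈ matchings G, A.card

/-- `avm(G) = S(G)/M(G)`: the average size of a matching of `G`. -/
noncomputable def avm (G : SimpleGraph V) : ℚ := (totS G : ℚ) / (numM G)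

/-- `m(G,k)`: the number of matchings of size `k` in `G`. -/
noncomputable def mCount (G : SimpleGraph V) (k : ℕ) : ℕ :=
  ((matchings G).filter fun A => A.card = k).card

/-- `μ(G)`: the matching number of `G`. -/
noncomputable def matchNum (G : SimpleGraph V) : ℕ := (matchings G).sup Finset.card

/-- Delete a vertex `u` (keeping it as an isolated vertex, which does not
affect matchings): all edges incident to `u` are removed. -/
def delVert (G : SimpleGraph V) (u : V) : SimpleGraph V :=
  G.deleteEdges {e : Sym2 V | u ∈ e}

theorem exists_elem_average_drops {X : Type*} [Fintype X] [DecidableEq X] [Nonempty X]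
    (B : Finset (Finset X))
    (hne : ∃ A ∈ B, ∃ A' ∈ B, A.card ≠ A'.card)
    (hcover : ∀ x : X, ∃ A ∈ B, x ∈ A) :
    ∃ x0 : X,
      (∑ A ∈ B.filter fun A => x0 ∉ A, (A.card : ℚ)) / ((B.filter fun A => x0 ∉ A).card : ℚ) <
        (∑ A ∈ B, (A.card : ℚ)) / (B.card : ℚ) := by
  classical
  obtain ⟨A1, hA1, A2, hA2, hAne⟩ := hne
  set n : ℚ := (B.card : ℚ) with hn
  set S : ℚ := ∑ A ∈ B, (A.card : ℚ) with hS
  set Q : ℚ := ∑ A ∈ B, (A.card : ℚ) ^ 2 with hQ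
  have hnpos : 0 < n := by
    have : (0 : ℕ) < B.card := Finset.card_pos.mpr ⟨A1, hA1⟩
    rw [hn]; exact_mod_cast this
  -- strict Cauchy–Schwarz: S^2 < n * Q
  have hCS : S ^ 2 < n * Q := by
    set m : ℚ := S / n with hm
    have hvar : ∑ A ∈ B, ((A.card : ℚ) - m) ^ 2 = Q - S ^ 2 / n := by
      have : ∀ A ∈ B, ((A.card : ℚ) - m) ^ 2
          = (A.card : ℚ) ^ 2 - 2 * m * (A.card : ℚ) + m ^ 2 := by
        intro A _; ring
      rw [Finset.sum_congr rfl this, Finset.sum_add_distrib, Finset.sum_sub_distrib,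
        Finset.sum_const, ← Finset.mul_sum, ← hS, ← hQ, nsmul_eq_mul, ← hn, hm]
      field_simp
      ring
    have hpos : 0 < ∑ A ∈ B, ((A.card : ℚ) - m) ^ 2 := by
      apply Finset.sum_pos' (fun A _ => sq_nonneg _)
      by_cases h1 : (A1.card : ℚ) = m
      · refine ⟨A2, hA2, ?_⟩
        have h2 : (A2.card : ℚ) ≠ m := by
          intro h2; apply hAne
          have : (A1.card : ℚ) = (A2.card : ℚ) := by rw [h1, h2]
          exact_mod_cast this
        have : (A2.card : ℚ) - m ≠ 0 := sub_ne_zero.mpr h2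
        positivity
      · refine ⟨A1, hA1, ?_⟩
        have : (A1.card : ℚ) - m ≠ 0 := sub_ne_zero.mpr h1
        positivity
    rw [hvar] at hpos
    have := mul_pos hnpos hpos
    have hne0 : n ≠ 0 := ne_of_gt hnpos
    calc S ^ 2 = n * (S ^ 2 / n) := by field_simp
    _ < n * Q := by nlinarith
  -- local sums
  set s : X → ℚ := fun x => ∑ A ∈ B.filter (fun A => x ∈ A), (A.card : ℚ) with hs
  set d : X → ℚ := fun x => ((B.filter (fun A => x ∈ A)).card : ℚ) with hd
  have hsum_s : ∑ x : X, s x = Q := by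
    simp only [hs, Finset.sum_filter]
    rw [Finset.sum_comm]
    refine Finset.sum_congr rfl fun A _ => ?_
    rw [Finset.sum_ite_mem, Finset.univ_inter, Finset.sum_const, nsmul_eq_mul]
    ring
  have hsum_d : ∑ x : X, d x = S := by
    have : ∀ x : X, d x = ∑ A ∈ B, if x ∈ A then (1 : ℚ) else 0 := by
      intro x
      rw [hd, Finset.sum_boole]
    rw [Finset.sum_congr rfl fun x _ => this x, Finset.sum_comm]
    refine Finset.sum_congr rfl fun A _ => ?_
    rw [Finset.sum_ite_mem, Finset.univ_inter, Finset.sum_const, nsmul_eq_mul]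
    ring
  -- find the good vertex
  have hex : ∃ x : X, S * d x < n * s x := by
    by_contra h
    push_neg at h
    have : n * Q ≤ S * S := by
      calc n * Q = ∑ x : X, n * s x := by rw [← hsum_s, Finset.mul_sum]
      _ ≤ ∑ x : X, S * d x := Finset.sum_le_sum fun x _ => h x
      _ = S * S := by rw [← Finset.mul_sum, hsum_d]
    nlinarith
  obtain ⟨x0, hx0⟩ := hex
  refine ⟨x0, ?_⟩
  have hsplit_sum : (∑ A ∈ B.filter fun A => x0 ∉ A, (A.card : ℚ)) = S - s x0 := by
    rw [hS, ← Finset.sum_filter_add_sum_filter_not B (fun A => x0 ∈ A) (fun A => (A.card : ℚ))]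
    rw [hs]
    ring
  have hsplit_card : ((B.filter fun A => x0 ∉ A).card : ℚ) = n - d x0 := by
    have := Finset.card_filter_add_card_filter_not (s := B) (p := fun A => x0 ∈ A)
    have h2 : ((B.filter fun A => x0 ∈ A).card : ℚ) + ((B.filter fun A => x0 ∉ A).card : ℚ)
        = n := by rw [hn]; exact_mod_cast this
    rw [hd]; linarith
  have hs_le : s x0 ≤ S := by
    apply Finset.sum_le_sum_of_subset_of_nonneg (Finset.filter_subset _ _)
    intro A _ _; positivity
  have hS_nonneg : 0 ≤ S := by
    rw [hS]; apply Finset.sum_nonneg; intro A _; positivity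
  have hd_nonneg : 0 ≤ d x0 := by rw [hd]; positivity
  have hnd_nonneg : 0 ≤ n - d x0 := by
    rw [← hsplit_card]; positivity
  have hprod : 0 < S * (n - d x0) := by nlinarith
  have hSpos : 0 < S := by nlinarith
  have hndpos : 0 < n - d x0 := by nlinarith
  rw [hsplit_sum, hsplit_card, div_lt_div_iff₀ hndpos hnpos]
  nlinarith

end AvgMatching
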